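/- Let n ≥ 6 be an even integer and let T = DC((n-4)/2, (n-2)/2, 3). Then the multiset of eigenvalues of the adjacency matrix of T is {√((n-1+√5)/2), -√((n-1+√5)/2), √((n-1-√5)/2), -√((n-1-√5)/2)} together with the eigenvalue 0 with multiplicity n - 4. -/

import Mathlib

open scoped Classical

/-- Adjacency matrix of a simple graph on `Fin n`, over `ℝ`. -/
noncomputable def adjMat {n : ℕ} (G : SimpleGraph (Fin n)) : Matrix (Fin n) (Fin n) ℝ :=
  fun i j => if G.Adj i j then 1 else 0

/-- The eigenvalues (roots of the characteristic polynomial, with multiplicity)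
of the adjacency matrix, sorted in nondecreasing order. -/
noncomputable def eigList {n : ℕ} (G : SimpleGraph (Fin n)) : List ℝ :=
  (Matrix.charpoly (adjMat G)).roots.sort (· ≤ ·)

/-- `lam k G` is the `k`-th largest adjacency eigenvalue of `G` (so `lam 1` is `λ₁`). -/
noncomputable def lam {n : ℕ} (k : ℕ) (G : SimpleGraph (Fin n)) : ℝ :=
  (eigList G).getD (n - k) 0

/-- The double comet `DC(k1, k2, l)`: a path on `l` vertices (the vertices `0, …, l-1`),
with `k1` pendant leaves attached to the terminal vertex `0` and `k2` pendant leaves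
attached to the terminal vertex `l - 1`. -/
def doubleComet (k1 k2 l : ℕ) : SimpleGraph (Fin (k1 + k2 + l)) :=
  SimpleGraph.fromRel (fun i j =>
    ((i : ℕ) + 1 = (j : ℕ) ∧ (j : ℕ) < l) ∨
    (l ≤ (i : ℕ) ∧ (i : ℕ) < l + k1 ∧ (j : ℕ) = 0) ∨
    (l + k1 ≤ (i : ℕ) ∧ (j : ℕ) = l - 1))

/-- Degree of a vertex. -/
noncomputable def deg {n : ℕ} (G : SimpleGraph (Fin n)) (u : Fin n) : ℕ :=
  (Finset.univ.filter (fun w => G.Adj u w)).card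
open Matrix Polynomial

noncomputable def eBlk (a b : ℕ) : (Fin 3 ⊕ (Fin a ⊕ Fin b)) ≃ Fin (a + b + 3) :=
  ((Equiv.refl (Fin 3)).sumCongr finSumFinEquiv).trans (finSumFinEquiv.trans (finCongr (by omega)))

lemma eBlk_inl (a b : ℕ) (i : Fin 3) : ((eBlk a b (Sum.inl i)) : ℕ) = (i : ℕ) := by
  simp [eBlk]

lemma eBlk_inr_inl (a b : ℕ) (u : Fin a) : ((eBlk a b (Sum.inr (Sum.inl u))) : ℕ) = 3 + (u : ℕ) := by
  simp [eBlk]; omega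

lemma eBlk_inr_inr (a b : ℕ) (v : Fin b) : ((eBlk a b (Sum.inr (Sum.inr v))) : ℕ) = 3 + a + (v : ℕ) := by
  simp [eBlk]; omega

lemma dc_adj (a b : ℕ) (i j : Fin (a + b + 3)) :
    (doubleComet a b 3).Adj i j ↔
      ((i:ℕ) ≠ (j:ℕ) ∧
        ((((i:ℕ)+1 = (j:ℕ) ∧ (j:ℕ) < 3) ∨ (3 ≤ (i:ℕ) ∧ (i:ℕ) < 3 + a ∧ (j:ℕ) = 0) ∨ (3 + a ≤ (i:ℕ) ∧ (j:ℕ) = 2)) ∨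
         (((j:ℕ)+1 = (i:ℕ) ∧ (i:ℕ) < 3) ∨ (3 ≤ (j:ℕ) ∧ (j:ℕ) < 3 + a ∧ (i:ℕ) = 0) ∨ (3 + a ≤ (j:ℕ) ∧ (i:ℕ) = 2)))) := by
  rw [doubleComet, SimpleGraph.fromRel_adj]
  simp only [ne_eq, Fin.ext_iff]

noncomputable def Amat (x : ℝ) : Matrix (Fin 3) (Fin 3) ℝ :=
  fun i j => x * (if (i:ℕ) = (j:ℕ) then 1 else 0) -
    (if ((i:ℕ)+1 = (j:ℕ) ∨ (j:ℕ)+1 = (i:ℕ)) then 1 else 0)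

noncomputable def Bmat (a b : ℕ) : Matrix (Fin 3) (Fin a ⊕ Fin b) ℝ :=
  fun i u => Sum.elim (fun _ => if (i:ℕ) = 0 then (-1:ℝ) else 0)
    (fun _ => if (i:ℕ) = 2 then (-1:ℝ) else 0) u

noncomputable def Cmat (a b : ℕ) : Matrix (Fin a ⊕ Fin b) (Fin 3) ℝ :=
  fun u i => Sum.elim (fun _ => if (i:ℕ) = 0 then (-1:ℝ) else 0)
    (fun _ => if (i:ℕ) = 2 then (-1:ℝ) else 0) u

lemma blocks (a b : ℕ) (x : ℝ) :
    (x • (1 : Matrix (Fin (a+b+3)) (Fin (a+b+3)) ℝ) - adjMat (doubleComet a b 3)).submatrix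
        (eBlk a b) (eBlk a b)
      = Matrix.fromBlocks (Amat x) (Bmat a b) (Cmat a b)
          (x • (1 : Matrix (Fin a ⊕ Fin b) (Fin a ⊕ Fin b) ℝ)) := by
  have hval : ∀ p q : Fin 3 ⊕ (Fin a ⊕ Fin b),
      (eBlk a b p = eBlk a b q) ↔ ((eBlk a b p : ℕ) = (eBlk a b q : ℕ)) := by
    intro p q; exact Fin.ext_iff
  ext p q
  rcases p with i | u | v <;> rcases q with j | u' | v' <;>
    simp only [Matrix.submatrix_apply, Matrix.sub_apply, Matrix.smul_apply, Matrix.one_apply,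
      smul_eq_mul, adjMat, dc_adj, hval, eBlk_inl, eBlk_inr_inl, eBlk_inr_inr,
      Matrix.fromBlocks_apply₁₁, Matrix.fromBlocks_apply₁₂, Matrix.fromBlocks_apply₂₁,
      Matrix.fromBlocks_apply₂₂, Amat, Bmat, Cmat, Sum.elim_inl, Sum.elim_inr,
      Sum.inl.injEq, Sum.inr.injEq, Fin.ext_iff] <;>
    split_ifs <;> first | ring1 | (exfalso; first | exact ‹False› | omega)

lemma BC_mul (a b : ℕ) :
    Bmat a b * Cmat a b = fun (i k : Fin 3) =>
      (a : ℝ) * ((if (i:ℕ) = 0 then (-1:ℝ) else 0) * (if (k:ℕ) = 0 then (-1:ℝ) else 0)) +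
      (b : ℝ) * ((if (i:ℕ) = 2 then (-1:ℝ) else 0) * (if (k:ℕ) = 2 then (-1:ℝ) else 0)) := by
  funext i k
  simp [Matrix.mul_apply, Bmat, Cmat, Fintype.sum_sum_type, Finset.sum_const, Finset.card_univ,
    nsmul_eq_mul]

lemma eval_cp {m : ℕ} (M : Matrix (Fin m) (Fin m) ℝ) (x : ℝ) :
    M.charpoly.eval x = (x • (1 : Matrix (Fin m) (Fin m) ℝ) - M).det := by
  rw [Matrix.charpoly, ← Polynomial.coe_evalRingHom, RingHom.map_det]
  congr 1
  ext i j
  by_cases h : i = j <;>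
    simp [Matrix.charmatrix_apply, Matrix.one_apply, Matrix.diagonal_apply, h]

lemma det_key (a b : ℕ) (x : ℝ) (hx : x ≠ 0) :
    (x • (1 : Matrix (Fin (a+b+3)) (Fin (a+b+3)) ℝ) - adjMat (doubleComet a b 3)).det * x
      = x ^ (a + b) * (x^4 - ((a:ℝ)+(b:ℝ)+2)*x^2 + ((a:ℝ)*(b:ℝ) + (a:ℝ) + (b:ℝ))) := by
  rw [← Matrix.det_submatrix_equiv_self (eBlk a b), blocks]
  haveI : Invertible (x • (1 : Matrix (Fin a ⊕ Fin b) (Fin a ⊕ Fin b) ℝ)) :=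
    ⟨x⁻¹ • 1, by rw [Matrix.smul_mul, Matrix.one_mul, smul_smul, inv_mul_cancel₀ hx, one_smul],
      by rw [Matrix.smul_mul, Matrix.one_mul, smul_smul, mul_inv_cancel₀ hx, one_smul]⟩
  rw [Matrix.det_fromBlocks₂₂]
  have hinv : (⅟(x • (1 : Matrix (Fin a ⊕ Fin b) (Fin a ⊕ Fin b) ℝ)))
      = x⁻¹ • (1 : Matrix (Fin a ⊕ Fin b) (Fin a ⊕ Fin b) ℝ) :=
    invOf_eq_right_inv (by
      rw [Matrix.smul_mul, Matrix.one_mul, smul_smul, mul_inv_cancel₀ hx, one_smul])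
  rw [hinv, Matrix.mul_smul, Matrix.mul_one, Matrix.smul_mul, BC_mul]
  have hdet1 : (x • (1 : Matrix (Fin a ⊕ Fin b) (Fin a ⊕ Fin b) ℝ)).det = x ^ (a + b) := by
    rw [Matrix.det_smul, Matrix.det_one]
    simp [Fintype.card_sum]
  rw [hdet1, Matrix.det_fin_three]
  simp only [Matrix.sub_apply, Matrix.smul_apply, Amat, smul_eq_mul]
  dsimp only [HSMul.hSMul, SMul.smul]
  norm_num
  field_simp
  ring

/-- The spectrum (multiset of adjacency eigenvalues) of `DC((n-4)/2, (n-2)/2, 3)` for even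
`n ≥ 6` is `{±√((n-1+√5)/2), ±√((n-1-√5)/2)}` together with `0` of multiplicity `n - 4`. -/
theorem spectrum_balanced_DC_even (n : ℕ) (hn : 6 ≤ n) (heven : Even n) :
    (Matrix.charpoly (adjMat (doubleComet ((n - 4) / 2) ((n - 2) / 2) 3))).roots =
      {Real.sqrt (((n : ℝ) - 1 + Real.sqrt 5) / 2),
       -Real.sqrt (((n : ℝ) - 1 + Real.sqrt 5) / 2),
       Real.sqrt (((n : ℝ) - 1 - Real.sqrt 5) / 2),
       -Real.sqrt (((n : ℝ) - 1 - Real.sqrt 5) / 2)} +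
      Multiset.replicate (n - 4) (0 : ℝ) := by
  obtain ⟨m, hm⟩ := heven
  set a := (n - 4) / 2 with ha'
  set b := (n - 2) / 2 with hb'
  have h2a : 2 * a = n - 4 := by omega
  have h2b : 2 * b = n - 2 := by omega
  have hk : (n - 4) + 1 = a + b := by omega
  have h4n : (4:ℕ) ≤ n := by omega
  have h2n : (2:ℕ) ≤ n := by omega
  have hcasta : (a : ℝ) = ((n:ℝ) - 4) / 2 := by
    have h : ((2 * a : ℕ) : ℝ) = ((n - 4 : ℕ) : ℝ) := by exact_mod_cast congrArg (Nat.cast : ℕ → ℝ) h2a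
    push_cast [Nat.cast_sub h4n] at h
    linarith
  have hcastb : (b : ℝ) = ((n:ℝ) - 2) / 2 := by
    have h : ((2 * b : ℕ) : ℝ) = ((n - 2 : ℕ) : ℝ) := by exact_mod_cast congrArg (Nat.cast : ℕ → ℝ) h2b
    push_cast [Nat.cast_sub h2n] at h
    linarith
  set s := Real.sqrt 5 with hs
  have hs5 : s ^ 2 = 5 := Real.sq_sqrt (by norm_num)
  have hsnn : (0:ℝ) ≤ s := Real.sqrt_nonneg 5
  have hs3 : s ≤ 3 := by nlinarith
  have hn6 : (6:ℝ) ≤ (n:ℝ) := by exact_mod_cast hn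
  set α := Real.sqrt (((n : ℝ) - 1 + s) / 2) with hα
  set β := Real.sqrt (((n : ℝ) - 1 - s) / 2) with hβ
  have hα2 : α ^ 2 = ((n:ℝ) - 1 + s) / 2 := Real.sq_sqrt (by linarith)
  have hβ2 : β ^ 2 = ((n:ℝ) - 1 - s) / 2 := Real.sq_sqrt (by linarith)
  set p := (adjMat (doubleComet a b 3)).charpoly with hp
  set F : Polynomial ℝ :=
    (X - C α) * ((X - C (-α)) * ((X - C β) * ((X - C (-β)) * X ^ (n - 4)))) with hF
  have hpF : p = F := by
    have hroot : {x : ℝ | x ≠ 0} ⊆ {x | (p - F).IsRoot x} := by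
      intro x hx
      simp only [Set.mem_setOf_eq] at hx ⊢
      have e1 : (x - α) * (x - -α) = x^2 - (((n:ℝ) - 1 + s) / 2) := by rw [← hα2]; ring
      have e2 : (x - β) * (x - -β) = x^2 - (((n:ℝ) - 1 - s) / 2) := by rw [← hβ2]; ring
      have key : ((x - α) * (x - -α)) * ((x - β) * (x - -β))
          = x^4 - ((a:ℝ)+(b:ℝ)+2)*x^2 + ((a:ℝ)*(b:ℝ) + (a:ℝ) + (b:ℝ)) := by
        rw [e1, e2, hcasta, hcastb]
        linear_combination (-(1:ℝ)/4) * hs5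
      have hxp : x ^ (n - 4) * x = x ^ (a + b) := by rw [← pow_succ, hk]
      have h1 : p.eval x * x
          = x ^ (a+b) * (x^4 - ((a:ℝ)+(b:ℝ)+2)*x^2 + ((a:ℝ)*(b:ℝ) + (a:ℝ) + (b:ℝ))) := by
        rw [hp, eval_cp]; exact det_key a b x hx
      have h2 : F.eval x * x
          = x ^ (a+b) * (x^4 - ((a:ℝ)+(b:ℝ)+2)*x^2 + ((a:ℝ)*(b:ℝ) + (a:ℝ) + (b:ℝ))) := by
        simp only [hF, Polynomial.eval_mul, Polynomial.eval_sub, Polynomial.eval_pow,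
          Polynomial.eval_X, Polynomial.eval_C]
        rw [← key, ← hxp]; ring
      have hev : p.eval x = F.eval x := mul_right_cancel₀ hx (h1.trans h2.symm)
      simp only [Polynomial.IsRoot.def, Polynomial.eval_sub, sub_eq_zero]
      exact hev
    have hz : p - F = 0 :=
      Polynomial.eq_zero_of_infinite_isRoot _
        (((Set.finite_singleton (0:ℝ)).infinite_compl).mono hroot)
    exact sub_eq_zero.mp hz
  have hc : ∀ (c : ℝ) (q : Polynomial ℝ), q.Monic → ((X - C c) * q).roots = c ::ₘ q.roots := by
    intro c q hq
    rw [Polynomial.roots_mul (mul_ne_zero (Polynomial.X_sub_C_ne_zero c) hq.ne_zero),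
      Polynomial.roots_X_sub_C, Multiset.singleton_add]
  have m4 : (X ^ (n-4) : Polynomial ℝ).Monic := Polynomial.monic_X_pow _
  have r0 : (X ^ (n-4) : Polynomial ℝ).roots = Multiset.replicate (n-4) 0 := by
    rw [Polynomial.roots_pow, Polynomial.roots_X, Multiset.nsmul_singleton]
  rw [hpF, hF,
    hc _ _ ((Polynomial.monic_X_sub_C (-α)).mul ((Polynomial.monic_X_sub_C β).mul
      ((Polynomial.monic_X_sub_C (-β)).mul m4))),
    hc _ _ ((Polynomial.monic_X_sub_C β).mul ((Polynomial.monic_X_sub_C (-β)).mul m4)),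
    hc _ _ ((Polynomial.monic_X_sub_C (-β)).mul m4),
    hc _ _ m4, r0]
  simp [Multiset.insert_eq_cons, Multiset.cons_add, Multiset.singleton_add]
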